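/- Fix ℓ ∈ ℕ and let Y₁,…,Y_{ℓ+1} be independent with Y_i ~ Exp(ℓ+i). Define φ_ℓ(t) = ℓ+k for Σ_{i=1}^k Y_i ≤ t < Σ_{i=1}^{k+1} Y_i (0 ≤ k ≤ ℓ) and φ_ℓ(t) = 1 for t ≥ Σ_{i=1}^{ℓ+1} Y_i. Then E[∫₀^∞ e^{−t} φ_ℓ(t) dt] = (ℓ+1)(H_{2ℓ+2} − H_{ℓ+1}). -/

import Mathlib

open MeasureTheory ProbabilityTheory Real Finset
open scoped ENNReal

/-- The characteristic `φ_ℓ(t)` of the median-of-(2ℓ+1) binary search tree: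
`φ_ℓ(t) = ℓ + k` for `Σ_{i=1}^k Y_i ≤ t < Σ_{i=1}^{k+1} Y_i` (`0 ≤ k ≤ ℓ`),
and `φ_ℓ(t) = 1` for `t ≥ Σ_{i=1}^{ℓ+1} Y_i`. -/
noncomputable def phiMed (ℓ : ℕ) (Y : ℕ → ℝ) (t : ℝ) : ℝ :=
  if (∑ i ∈ Finset.Icc 1 (ℓ + 1), Y i) ≤ t then 1
  else (ℓ : ℝ) + ∑ k ∈ Finset.Icc 1 ℓ,
    (if (∑ i ∈ Finset.Icc 1 k, Y i) ≤ t then (1 : ℝ) else 0)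

open scoped NNReal

lemma aux_integral_exp_ind {s : ℝ} (hs : 0 ≤ s) :
    ∫ t in Set.Ioi (0:ℝ), (if s ≤ t then Real.exp (-t) else 0) = Real.exp (-s) := by
  have h1 : (fun t => if s ≤ t then Real.exp (-t) else 0)
      = (Set.Ici s).indicator (fun t => Real.exp (-t)) := by
    funext t; simp [Set.indicator, Set.mem_Ici]
  rw [h1, integral_indicator measurableSet_Ici, Measure.restrict_restrict measurableSet_Ici]
  rcases hs.lt_or_eq with h | h
  · have : Set.Ici s ∩ Set.Ioi 0 = Set.Ici s := by
      apply Set.inter_eq_left.mpr; intro x hx; exact lt_of_lt_of_le h hx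
    rw [this, integral_Ici_eq_integral_Ioi, integral_exp_neg_Ioi]
  · rw [← h]
    have : Set.Ici (0:ℝ) ∩ Set.Ioi 0 = Set.Ioi 0 := by
      ext x; simp (config := {contextual := true}) [le_of_lt]
    rw [this, integral_exp_neg_Ioi]

lemma aux_pathwise (ℓ : ℕ) (Z : ℕ → ℝ) (hZ : ∀ i ∈ Finset.Icc 1 (ℓ+1), 0 ≤ Z i) :
    ∫ t in Set.Ioi (0:ℝ), Real.exp (-t) * phiMed ℓ Z t
      = (ℓ : ℝ) + (∑ k ∈ Finset.Icc 1 ℓ, Real.exp (-(∑ i ∈ Finset.Icc 1 k, Z i)))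
        - (2*(ℓ:ℝ) - 1) * Real.exp (-(∑ i ∈ Finset.Icc 1 (ℓ+1), Z i)) := by
  set S : ℕ → ℝ := fun k => ∑ i ∈ Finset.Icc 1 k, Z i with hS
  have hSnn : ∀ k ≤ ℓ + 1, 0 ≤ S k := by
    intro k hk
    exact Finset.sum_nonneg fun i hi => hZ i (Finset.mem_Icc.mpr
      ⟨(Finset.mem_Icc.mp hi).1, le_trans (Finset.mem_Icc.mp hi).2 hk⟩)
  have hSle : ∀ k ∈ Finset.Icc 1 ℓ, S k ≤ S (ℓ+1) := by
    intro k hk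
    apply Finset.sum_le_sum_of_subset_of_nonneg
    · exact Finset.Icc_subset_Icc_right (le_trans (Finset.mem_Icc.mp hk).2 (Nat.le_succ ℓ))
    · intro i hi _; exact hZ i hi
  have key : ∀ t : ℝ, Real.exp (-t) * phiMed ℓ Z t
      = (ℓ : ℝ) * Real.exp (-t)
        + (∑ k ∈ Finset.Icc 1 ℓ, (if S k ≤ t then Real.exp (-t) else 0))
        - (2*(ℓ:ℝ) - 1) * (if S (ℓ+1) ≤ t then Real.exp (-t) else 0) := by
    intro t
    rw [phiMed]
    by_cases h : S (ℓ+1) ≤ t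
    · rw [if_pos h, if_pos h]
      have : ∀ k ∈ Finset.Icc 1 ℓ, (if S k ≤ t then Real.exp (-t) else 0) = Real.exp (-t) :=
        fun k hk => if_pos (le_trans (hSle k hk) h)
      rw [Finset.sum_congr rfl this, Finset.sum_const, Nat.card_Icc]
      simp only [nsmul_eq_mul]
      push_cast
      ring
    · rw [if_neg h, if_neg h]
      rw [mul_add, Finset.mul_sum]
      simp only [mul_ite, mul_one, mul_zero]
      ring_nf
      rfl
  rw [show (fun t => Real.exp (-t) * phiMed ℓ Z t) = fun t =>
      (ℓ : ℝ) * Real.exp (-t)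
        + (∑ k ∈ Finset.Icc 1 ℓ, (if S k ≤ t then Real.exp (-t) else 0))
        - (2*(ℓ:ℝ) - 1) * (if S (ℓ+1) ≤ t then Real.exp (-t) else 0) from funext key]
  have hexpint : IntegrableOn (fun t => Real.exp (-t)) (Set.Ioi (0:ℝ)) := by
    have := exp_neg_integrableOn_Ioi 0 (one_pos (α := ℝ))
    simpa using this
  have hind : ∀ s : ℝ, IntegrableOn (fun t => if s ≤ t then Real.exp (-t) else 0)
      (Set.Ioi (0:ℝ)) := by
    intro s
    have h1 : (fun t => if s ≤ t then Real.exp (-t) else 0)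
        = (Set.Ici s).indicator (fun t => Real.exp (-t)) := by
      funext t; simp [Set.indicator, Set.mem_Ici]
    rw [h1]
    exact hexpint.indicator measurableSet_Ici
  have hsumint : IntegrableOn (fun t => ∑ k ∈ Finset.Icc 1 ℓ,
      (if S k ≤ t then Real.exp (-t) else 0)) (Set.Ioi (0:ℝ)) :=
    integrable_finset_sum _ fun k _ => hind (S k)
  have h1 : IntegrableOn (fun t => (ℓ:ℝ) * Real.exp (-t) + ∑ k ∈ Finset.Icc 1 ℓ,
      (if S k ≤ t then Real.exp (-t) else 0)) (Set.Ioi (0:ℝ)) :=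
    (hexpint.const_mul _).add hsumint
  have h2 : IntegrableOn (fun t => (2*(ℓ:ℝ) - 1) * (if S (ℓ+1) ≤ t then Real.exp (-t) else 0))
      (Set.Ioi (0:ℝ)) := (hind _).const_mul _
  rw [integral_sub h1 h2,
    integral_add (hexpint.const_mul _) hsumint, integral_finset_sum _ fun k _ => hind (S k),
    integral_const_mul, integral_const_mul, integral_exp_neg_Ioi_zero,
    aux_integral_exp_ind (hSnn (ℓ+1) le_rfl)]
  rw [Finset.sum_congr rfl fun k hk => aux_integral_exp_ind (hSnn k
    (le_trans (Finset.mem_Icc.mp hk).2 (Nat.le_succ ℓ)))]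
  ring

lemma aux_expMeasure_integral {r : ℝ} (hr : 0 < r) :
    ∫ x, Real.exp (-x) ∂(expMeasure r) = r / (r + 1) := by
  have hme : expMeasure r = volume.withDensity
      (fun x => ((Real.toNNReal (exponentialPDFReal r x) : ℝ≥0) : ℝ≥0∞)) := rfl
  have hmeas : Measurable (fun x => Real.toNNReal (exponentialPDFReal r x)) :=
    (measurable_exponentialPDFReal r).real_toNNReal
  rw [hme, integral_withDensity_eq_integral_smul hmeas]
  have heq : (fun x => Real.toNNReal (exponentialPDFReal r x) • Real.exp (-x))
      = (Set.Ici (0:ℝ)).indicator (fun x => r * Real.exp (-((r+1) * x))) := by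
    funext x
    rw [NNReal.smul_def, smul_eq_mul, Real.coe_toNNReal _ (exponentialPDFReal_nonneg hr x)]
    rw [exponentialPDFReal, gammaPDFReal]
    simp only [rpow_one, Real.Gamma_one, div_one, sub_self, rpow_zero, mul_one]
    by_cases hx : 0 ≤ x
    · rw [if_pos hx, Set.indicator_of_mem (Set.mem_Ici.mpr hx)]
      rw [mul_assoc, ← Real.exp_add]
      ring_nf
    · rw [if_neg hx, Set.indicator_of_notMem (by simpa using hx), zero_mul]
  rw [heq, integral_indicator measurableSet_Ici, integral_Ici_eq_integral_Ioi,
    integral_const_mul]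
  have := integral_comp_mul_left_Ioi (fun x => Real.exp (-x)) 0 (by linarith : (0:ℝ) < r + 1)
  simp only [mul_zero] at this
  rw [this, integral_exp_neg_Ioi, neg_zero, Real.exp_zero, smul_eq_mul, mul_one]
  field_simp

lemma aux_prod_tel (ℓ k : ℕ) :
    ∏ i ∈ Finset.Icc 1 k, (((ℓ:ℝ) + i) / ((ℓ:ℝ) + i + 1)) = ((ℓ:ℝ)+1)/((ℓ:ℝ)+k+1) := by
  induction k with
  | zero =>
    have : (ℓ:ℝ) + 1 ≠ 0 := by positivity
    simp [div_self this]
  | succ n ih =>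
    rw [Finset.prod_Icc_succ_top (Nat.succ_le_succ (Nat.zero_le n)), ih]
    have h1 : (ℓ:ℝ) + n + 1 ≠ 0 := by positivity
    have h2 : (ℓ:ℝ) + (n+1:ℕ) + 1 ≠ 0 := by positivity
    push_cast at *
    field_simp
    ring

lemma aux_arith (ℓ : ℕ) :
    (ℓ:ℝ) + (∑ k ∈ Finset.Icc 1 ℓ, ((ℓ:ℝ)+1)/((ℓ:ℝ)+(k:ℝ)+1))
      - (2*(ℓ:ℝ)-1) * (((ℓ:ℝ)+1)/((ℓ:ℝ)+((ℓ+1:ℕ):ℝ)+1))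
      = ((ℓ:ℝ) + 1) *
        ((∑ i ∈ Finset.Icc 1 (2*ℓ + 2), (1 : ℝ) / i) - ∑ i ∈ Finset.Icc 1 (ℓ + 1), (1 : ℝ) / i) := by
  have hIccIoc : ∀ n : ℕ, Finset.Icc 1 n = Finset.Ioc 0 n := fun n => rfl
  have hdiff : (∑ i ∈ Finset.Icc 1 (2*ℓ + 2), (1 : ℝ) / i)
      - (∑ i ∈ Finset.Icc 1 (ℓ + 1), (1 : ℝ) / i)
      = ∑ i ∈ Finset.Ioc (ℓ+1) (2*ℓ+2), (1 : ℝ) / i := by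
    rw [hIccIoc, hIccIoc,
      ← Finset.sum_Ioc_consecutive (fun i : ℕ => (1:ℝ)/i) (Nat.zero_le (ℓ+1)) (by omega)]
    ring
  have hre : ∑ i ∈ Finset.Ioc (ℓ+1) (2*ℓ+2), (1 : ℝ) / i
      = ∑ k ∈ Finset.Icc 1 (ℓ+1), (1 : ℝ) / ((ℓ+1+k : ℕ) : ℝ) := by
    rw [hIccIoc]
    have : Finset.Ioc (ℓ+1) (2*ℓ+2) = (Finset.Ioc 0 (ℓ+1)).map (addLeftEmbedding (ℓ+1)) := by
      rw [Finset.map_add_left_Ioc]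
      congr 1
      omega
    rw [this, Finset.sum_map]
    rfl
  rw [hdiff, hre, Finset.sum_Icc_succ_top (Nat.succ_le_succ (Nat.zero_le ℓ)), mul_add,
    Finset.mul_sum]
  have h2 : (2*(ℓ:ℝ)+2) ≠ 0 := by positivity
  have hterm : ∀ k ∈ Finset.Icc 1 ℓ,
      ((ℓ:ℝ)+1) * ((1:ℝ) / ((ℓ+1+k : ℕ) : ℝ)) = ((ℓ:ℝ)+1)/((ℓ:ℝ)+(k:ℝ)+1) := by
    intro k hk
    push_cast
    ring
  rw [Finset.sum_congr rfl hterm]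
  push_cast
  field_simp
  ring

section mainAux
variable {Ω : Type*} [MeasureSpace Ω] [IsProbabilityMeasure (ℙ : Measure Ω)]

lemma aux_EexpS (ℓ : ℕ) (Y : ℕ → Ω → ℝ)
    (hmeasY : ∀ i, Measurable (Y i))
    (hY : ∀ i ∈ Finset.Icc 1 (ℓ + 1), Measure.map (Y i) ℙ = expMeasure (ℓ + i))
    (hindep : iIndepFun Y ℙ)
    (k : ℕ) (hk : k ≤ ℓ + 1) :
    ∫ ω, Real.exp (-(∑ i ∈ Finset.Icc 1 k, Y i ω)) ∂ℙ = ((ℓ:ℝ)+1)/((ℓ:ℝ)+k+1) := by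
  have hmgf : ∫ ω, Real.exp (-(∑ i ∈ Finset.Icc 1 k, Y i ω)) ∂ℙ
      = mgf (∑ i ∈ Finset.Icc 1 k, Y i) ℙ (-1) := by
    rw [mgf]
    congr 1
    funext ω
    simp [Finset.sum_apply, neg_one_mul]
  rw [hmgf, hindep.mgf_sum hmeasY]
  have hterm : ∀ i ∈ Finset.Icc 1 k, mgf (Y i) ℙ (-1) = ((ℓ:ℝ) + i) / ((ℓ:ℝ) + i + 1) := by
    intro i hi
    have hi' : i ∈ Finset.Icc 1 (ℓ + 1) := Finset.mem_Icc.mpr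
      ⟨(Finset.mem_Icc.mp hi).1, le_trans (Finset.mem_Icc.mp hi).2 hk⟩
    have hipos : (0:ℝ) < (ℓ:ℝ) + i := by
      have : 1 ≤ i := (Finset.mem_Icc.mp hi).1
      have : (1:ℝ) ≤ (i:ℝ) := by exact_mod_cast this
      positivity
    rw [mgf]
    calc ∫ ω, Real.exp (-1 * Y i ω) ∂ℙ
        = ∫ x, Real.exp (-x) ∂(Measure.map (Y i) ℙ) := by
          rw [integral_map (hmeasY i).aemeasurable]
          · simp [neg_one_mul]
          · exact (Real.continuous_exp.comp continuous_neg).aestronglyMeasurable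
      _ = ((ℓ:ℝ) + i) / ((ℓ:ℝ) + i + 1) := by rw [hY i hi', aux_expMeasure_integral hipos]
  rw [Finset.prod_congr rfl hterm, aux_prod_tel]

lemma aux_ae_nonneg (ℓ : ℕ) (Y : ℕ → Ω → ℝ)
    (hmeasY : ∀ i, Measurable (Y i))
    (hY : ∀ i ∈ Finset.Icc 1 (ℓ + 1), Measure.map (Y i) ℙ = expMeasure (ℓ + i)) :
    ∀ᵐ ω ∂(ℙ : Measure Ω), ∀ i ∈ Finset.Icc 1 (ℓ + 1), 0 ≤ Y i ω := by
  simp only [← Finset.mem_coe]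
  rw [ae_ball_iff (Finset.Icc 1 (ℓ+1)).countable_toSet]
  intro i hi
  have h0 : ℙ {ω | Y i ω < 0} = 0 := by
    have : {ω | Y i ω < 0} = Y i ⁻¹' Set.Iio 0 := rfl
    rw [this, ← Measure.map_apply (hmeasY i) measurableSet_Iio, hY i hi]
    show (volume.withDensity (exponentialPDF ((ℓ:ℝ) + i))) (Set.Iio 0) = 0
    rw [withDensity_apply _ measurableSet_Iio]
    exact lintegral_exponentialPDF_of_nonpos le_rfl
  filter_upwards [measure_eq_zero_iff_ae_notMem.mp h0] with ω hω
  simpa using not_lt.mp hω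

end mainAux

theorem stmt8 {Ω : Type*} [MeasureSpace Ω] [IsProbabilityMeasure (ℙ : Measure Ω)]
    (ℓ : ℕ)
    (Y : ℕ → Ω → ℝ)
    (hmeasY : ∀ i, Measurable (Y i))
    (hY : ∀ i ∈ Finset.Icc 1 (ℓ + 1), Measure.map (Y i) ℙ = expMeasure (ℓ + i))
    (hindep : iIndepFun Y ℙ) :
    ∫ ω, (∫ t in Set.Ioi (0:ℝ), Real.exp (-t) * phiMed ℓ (fun i => Y i ω) t) ∂ℙ
      = ((ℓ : ℝ) + 1) *
        ((∑ i ∈ Finset.Icc 1 (2*ℓ + 2), (1 : ℝ) / i) - ∑ i ∈ Finset.Icc 1 (ℓ + 1), (1 : ℝ) / i)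
      := by
  have hae := aux_ae_nonneg ℓ Y hmeasY hY
  have hcong : ∫ ω, (∫ t in Set.Ioi (0:ℝ), Real.exp (-t) * phiMed ℓ (fun i => Y i ω) t) ∂ℙ
      = ∫ ω, ((ℓ : ℝ) + (∑ k ∈ Finset.Icc 1 ℓ, Real.exp (-(∑ i ∈ Finset.Icc 1 k, Y i ω)))
          - (2*(ℓ:ℝ) - 1) * Real.exp (-(∑ i ∈ Finset.Icc 1 (ℓ+1), Y i ω))) ∂ℙ := by
    apply integral_congr_ae
    filter_upwards [hae] with ω hω
    exact aux_pathwise ℓ (fun i => Y i ω) hω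
  rw [hcong]
  have hmeasS : ∀ k : ℕ, Measurable (fun ω => Real.exp (-(∑ i ∈ Finset.Icc 1 k, Y i ω))) := by
    intro k
    exact ((Finset.measurable_sum _ fun i _ => hmeasY i).neg).exp
  have hint : ∀ k : ℕ, k ≤ ℓ + 1 →
      Integrable (fun ω => Real.exp (-(∑ i ∈ Finset.Icc 1 k, Y i ω))) ℙ := by
    intro k hk
    apply Integrable.mono' (integrable_const (1:ℝ)) (hmeasS k).aestronglyMeasurable
    filter_upwards [hae] with ω hω
    have h0 : 0 ≤ ∑ i ∈ Finset.Icc 1 k, Y i ω :=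
      Finset.sum_nonneg fun i hi => hω i (Finset.mem_Icc.mpr
        ⟨(Finset.mem_Icc.mp hi).1, le_trans (Finset.mem_Icc.mp hi).2 hk⟩)
    rw [Real.norm_eq_abs, abs_of_pos (Real.exp_pos _)]
    exact Real.exp_le_one_iff.mpr (by linarith)
  have hintsum : Integrable (fun ω => ∑ k ∈ Finset.Icc 1 ℓ,
      Real.exp (-(∑ i ∈ Finset.Icc 1 k, Y i ω))) ℙ :=
    integrable_finset_sum _ fun k hk => hint k (le_trans (Finset.mem_Icc.mp hk).2 (Nat.le_succ ℓ))
  have h1 : Integrable (fun ω => (ℓ : ℝ) + (∑ k ∈ Finset.Icc 1 ℓ,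
      Real.exp (-(∑ i ∈ Finset.Icc 1 k, Y i ω)))) ℙ := (integrable_const _).add hintsum
  have h2 : Integrable (fun ω => (2*(ℓ:ℝ) - 1) *
      Real.exp (-(∑ i ∈ Finset.Icc 1 (ℓ+1), Y i ω))) ℙ := (hint (ℓ+1) le_rfl).const_mul _
  rw [integral_sub h1 h2, integral_add (integrable_const _) hintsum,
    integral_finset_sum _ (fun k hk => hint k (le_trans (Finset.mem_Icc.mp hk).2 (Nat.le_succ ℓ))),
    integral_const, integral_const_mul, aux_EexpS ℓ Y hmeasY hY hindep (ℓ+1) le_rfl]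
  rw [Finset.sum_congr rfl fun k hk => aux_EexpS ℓ Y hmeasY hY hindep k
    (le_trans (Finset.mem_Icc.mp hk).2 (Nat.le_succ ℓ))]
  simp only [measure_univ, probReal_univ, ENNReal.toReal_one, smul_eq_mul, one_mul]
  exact aux_arith ℓ
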